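/- In int-semantics, the reduction scheme [φ]Kψ ↔ (int(φ) → K[φ]ψ) is valid. -/
import Mathlib

/-- Formulas of the public announcement language PAL (with the `int` modality). -/
inductive Form : Type
  | atom : ℕ → Form
  | neg : Form → Form
  | and : Form → Form → Form
  | K : Form → Form
  | int : Form → Form
  | ann : Form → Form → Form

/-- Material implication, defined classically. -/
def Form.imp (φ ψ : Form) : Form := .neg (.and φ (.neg ψ))

/-- Int-semantics for PAL on a topological subset model with valuation `v`. -/
def sat {α : Type*} [TopologicalSpace α] (v : ℕ → Set α) : Form → α → Set α → Prop
  | .atom n, x, _ => x ∈ v n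
  | .neg φ, x, U => ¬ sat v φ x U
  | .and φ ψ, x, U => sat v φ x U ∧ sat v ψ x U
  | .K φ, x, U => ∀ y ∈ U, sat v φ y U
  | .int φ, x, U => x ∈ interior {y ∈ U | sat v φ y U}
  | .ann φ ψ, x, U =>
      x ∈ interior {y ∈ U | sat v φ y U} → sat v ψ x (interior {y ∈ U | sat v φ y U})

/-- Reduction scheme for knowledge: `[φ]Kψ ↔ (int(φ) → K[φ]ψ)` is valid in int-semantics. -/
theorem reduction_K {α : Type*} [TopologicalSpace α] (v : ℕ → Set α) (φ ψ : Form)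
    (x : α) (U : Set α) (hx : x ∈ U) (hU : IsOpen U) :
    sat v (.ann φ (.K ψ)) x U ↔ sat v ((Form.int φ).imp (.K (.ann φ ψ))) x U := by
  have hsub : interior {y ∈ U | sat v φ y U} ⊆ U :=
    interior_subset.trans (Set.sep_subset _ _)
  simp only [sat, Form.imp, not_and, not_forall, not_not]
  constructor
  · intro h hxi
    push_neg
    intro y _ hyi
    exact h hxi y hyi
  · intro h hxi y hyi
    have := h hxi
    push_neg at this
    exact this y (hsub hyi) hyi
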